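/- Let f, g ∈ ℝ[x_1, ..., x_n] be nonzero polynomials all of whose coefficients are nonnegative. Then the Newton polytope of the product is the Minkowski sum of the Newton polytopes: N[f·g] = N[f] + N[g]. -/

import Mathlib

open scoped Pointwise

lemma support_mul_eq_of_nonneg {n : ℕ} (f g : MvPolynomial (Fin n) ℝ)
    (hfpos : ∀ d, 0 ≤ f.coeff d) (hgpos : ∀ d, 0 ≤ g.coeff d) :
    (f * g).support = f.support + g.support := by
  apply le_antisymm (MvPolynomial.support_mul f g)
  intro d hd
  rw [Finset.mem_add] at hd
  obtain ⟨a, ha, b, hb, rfl⟩ := hd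
  rw [MvPolynomial.mem_support_iff] at ha hb ⊢
  rw [MvPolynomial.coeff_mul]
  have hpos : 0 < f.coeff a * g.coeff b :=
    mul_pos ((hfpos a).lt_of_ne (Ne.symm ha)) ((hgpos b).lt_of_ne (Ne.symm hb))
  have : 0 < ∑ x ∈ Finset.HasAntidiagonal.antidiagonal (a + b), f.coeff x.1 * g.coeff x.2 := by
    refine Finset.sum_pos' (fun x _ => mul_nonneg (hfpos _) (hgpos _)) ⟨(a, b), ?_, hpos⟩
    simp [Finset.HasAntidiagonal.mem_antidiagonal]
  exact this.ne'

/-- For nonzero polynomials `f, g ∈ ℝ[x₁,…,xₙ]` with nonnegative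
coefficients, the Newton polytope of the product is the Minkowski sum of the Newton
polytopes: `N[f·g] = N[f] + N[g]`. -/
theorem newton_polytope_mul_nonneg_coeffs
    (n : ℕ) (f g : MvPolynomial (Fin n) ℝ) (hf : f ≠ 0) (hg : g ≠ 0)
    (hfpos : ∀ d, 0 ≤ f.coeff d) (hgpos : ∀ d, 0 ≤ g.coeff d) :
    convexHull ℝ ((fun d : Fin n →₀ ℕ => fun i => (d i : ℝ)) '' ↑(f * g).support) =
      convexHull ℝ ((fun d : Fin n →₀ ℕ => fun i => (d i : ℝ)) '' ↑f.support) +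
        convexHull ℝ ((fun d : Fin n →₀ ℕ => fun i => (d i : ℝ)) '' ↑g.support) := by
  let e : (Fin n →₀ ℕ) →+ (Fin n → ℝ) :=
    { toFun := fun d => fun i => (d i : ℝ)
      map_zero' := by ext i; simp
      map_add' := fun a b => by ext i; simp }
  have himg : (fun d : Fin n →₀ ℕ => fun i => (d i : ℝ)) '' ↑(f * g).support
      = ((fun d : Fin n →₀ ℕ => fun i => (d i : ℝ)) '' ↑f.support)
        + ((fun d : Fin n →₀ ℕ => fun i => (d i : ℝ)) '' ↑g.support) := by
    rw [support_mul_eq_of_nonneg f g hfpos hgpos, Finset.coe_add]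
    exact Set.image_add e
  rw [himg, convexHull_add]
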